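/- Let X be a pseudocubical object with pseudoconnections in an abelian category A. Then the natural monomorphism i : M(X) → N(X) is a chain homotopy equivalence; in fact it has a homotopy inverse r : N(X) → M(X) with r ∘ i = id_{M(X)}. In particular, the induced maps i_* : H_n(M(X)) → H_n(N(X)) are isomorphisms for all n ≥ 0. -/

import Mathlib

open CategoryTheory CategoryTheory.Limits

universe v u

/-- A precubical object in a category `C`. `d n i ε : X (n+1) ⟶ X n` is the face
`∂_i^ε` for `1 ≤ i ≤ n+1`; values outside this range are junk. -/
structure Precub (C : Type u) [Category.{v} C] where
  X : ℕ → C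
  d : ∀ n : ℕ, ℕ → Bool → (X (n + 1) ⟶ X n)
  dd : ∀ (n i j : ℕ) (α ε : Bool), 1 ≤ i → i < j → j ≤ n + 2 →
    d (n + 1) j ε ≫ d n i α = d (n + 1) i α ≫ d n (j - 1) ε

/-- A pseudocubical object: a precubical object with pseudodegeneracies. -/
structure Pseudocub (C : Type u) [Category.{v} C] extends Precub C where
  s : ∀ n : ℕ, ℕ → (X n ⟶ X (n + 1))
  ds_lt : ∀ (n i j : ℕ) (α : Bool), 1 ≤ i → i < j → j ≤ n + 2 →
    s (n + 1) j ≫ d (n + 1) i α = d n i α ≫ s n (j - 1)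
  ds_eq : ∀ (n i : ℕ) (α : Bool), 1 ≤ i → i ≤ n + 1 → s n i ≫ d n i α = 𝟙 (X n)
  ds_gt : ∀ (n i j : ℕ) (α : Bool), 1 ≤ j → j < i → i ≤ n + 2 →
    s (n + 1) j ≫ d (n + 1) i α = d n (i - 1) α ≫ s n j

/-- A pseudocubical object with pseudoconnections. -/
structure PseudocubConn (C : Type u) [Category.{v} C] extends Pseudocub C where
  conn : ∀ n : ℕ, ℕ → (X (n + 1) ⟶ X (n + 2))
  dconn_lt : ∀ (n i j : ℕ) (α : Bool), 1 ≤ i → i < j → j ≤ n + 2 →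
    conn (n + 1) j ≫ d (n + 2) i α = d (n + 1) i α ≫ conn n (j - 1)
  dconn_eq_zero : ∀ (n j : ℕ), 1 ≤ j → j ≤ n + 1 →
    conn n j ≫ d (n + 1) j false = 𝟙 (X (n + 1)) ∧
    conn n j ≫ d (n + 1) (j + 1) false = 𝟙 (X (n + 1))
  dconn_eq_one : ∀ (n j : ℕ), 1 ≤ j → j ≤ n + 1 →
    conn n j ≫ d (n + 1) j true = d n j true ≫ s n j ∧
    conn n j ≫ d (n + 1) (j + 1) true = d n j true ≫ s n j
  dconn_gt : ∀ (n i j : ℕ) (α : Bool), 1 ≤ j → j + 1 < i → i ≤ n + 3 →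
    conn (n + 1) j ≫ d (n + 2) i α = d (n + 1) (i - 1) α ≫ conn n j

/-- Data exhibiting `K` as the normalized chain complex `N(X)` of a precubical object `X`
in an abelian category: `K_n` is the intersection of the kernels of the faces `∂_i^1`
with differential the (restricted) alternating sum `Σ (-1)^(i+1) ∂_i^0`. -/
structure NormalizedData {C : Type u} [Category.{v} C] [Abelian C] (X : Precub C) where
  K : ChainComplex C ℕ
  ι : ∀ n, K.X n ⟶ X.X n
  ι_mono : ∀ n, Mono (ι n)
  ι_ker : ∀ (n i : ℕ), 1 ≤ i → i ≤ n + 1 → ι (n + 1) ≫ X.d n i true = 0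
  ι_lift : ∀ (n : ℕ) {W : C} (g : W ⟶ X.X (n + 1)),
    (∀ i, 1 ≤ i → i ≤ n + 1 → g ≫ X.d n i true = 0) →
    ∃ l : W ⟶ K.X (n + 1), l ≫ ι (n + 1) = g
  ι_lift₀ : ∀ {W : C} (g : W ⟶ X.X 0), ∃ l : W ⟶ K.X 0, l ≫ ι 0 = g
  diff : ∀ n : ℕ, K.d (n + 1) n ≫ ι n =
    ι (n + 1) ≫ ∑ i ∈ Finset.Icc 1 (n + 1), ((-1 : ℤ) ^ (i + 1)) • X.d n i false

/-- Data exhibiting `K` as the Moore chain complex `M(X)` of a precubical object `X`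
in an abelian category. -/
structure MooreData {C : Type u} [Category.{v} C] [Abelian C] (X : Precub C) where
  K : ChainComplex C ℕ
  ι : ∀ n, K.X n ⟶ X.X n
  ι_mono : ∀ n, Mono (ι n)
  ι_ker_one : ∀ (n i : ℕ), 1 ≤ i → i ≤ n + 1 → ι (n + 1) ≫ X.d n i true = 0
  ι_ker_zero : ∀ (n i : ℕ), 1 ≤ i → i ≤ n → ι (n + 1) ≫ X.d n i false = 0
  ι_lift : ∀ (n : ℕ) {W : C} (g : W ⟶ X.X (n + 1)),
    (∀ i, 1 ≤ i → i ≤ n + 1 → g ≫ X.d n i true = 0) →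
    (∀ i, 1 ≤ i → i ≤ n → g ≫ X.d n i false = 0) →
    ∃ l : W ⟶ K.X (n + 1), l ≫ ι (n + 1) = g
  ι_lift₀ : ∀ {W : C} (g : W ⟶ X.X 0), ∃ l : W ⟶ K.X 0, l ≫ ι 0 = g
  diff : ∀ n : ℕ, K.d (n + 1) n ≫ ι n =
    ι (n + 1) ≫ (((-1 : ℤ) ^ (n + 2)) • X.d n (n + 1) false)

namespace Stmt1Aux

open Finset

variable {C : Type u} [Category.{v} C] [Abelian C]

variable (X : PseudocubConn C)

/-- Alternating sum of the `0`-faces. -/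
def DD (m : ℕ) : X.X (m + 1) ⟶ X.X m :=
  ∑ i ∈ Finset.Icc 1 (m + 1), ((-1 : ℤ) ^ (i + 1)) • X.d m i false

/-- The elementary projection killing the `(q+1)`-st `0`-face. -/
def phi (n q : ℕ) : X.X (n + 2) ⟶ X.X (n + 2) :=
  𝟙 _ - X.d (n + 1) (q + 1) false ≫ X.conn n (q + 1)

/-- Composite of the `phi`'s, in degree `n + 2`. -/
def GG2 (n : ℕ) : ℕ → (X.X (n + 2) ⟶ X.X (n + 2))
  | 0 => 𝟙 _
  | k+1 => GG2 n k ≫ phi X n k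

/-- Composite of the `phi`'s. -/
def GG : ∀ (n : ℕ), ℕ → (X.X n ⟶ X.X n)
  | 0 => fun _ => 𝟙 _
  | 1 => fun _ => 𝟙 _
  | n+2 => GG2 X n

/-- The homotopy operators. -/
def Hh : ∀ n, X.X n ⟶ X.X (n + 1)
  | 0 => 0
  | n+1 => ∑ k ∈ Finset.range (n + 1),
      ((-1 : ℤ) ^ k) • (GG X (n + 1) k ≫ X.conn n (k + 1))

variable {X}

/-- Being in the kernel of all the `1`-faces. -/
def IsN {W : C} {n : ℕ} (u : W ⟶ X.X (n + 1)) : Prop :=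
  ∀ i, 1 ≤ i → i ≤ n + 1 → u ≫ X.d n i true = 0

lemma GG_zero (n : ℕ) : GG X (n + 2) 0 = 𝟙 _ := rfl

lemma GG_succ (n k : ℕ) : GG X (n + 2) (k + 1) = GG X (n + 2) k ≫ phi X n k := rfl

lemma GG_one (k : ℕ) : GG X 1 k = 𝟙 _ := rfl

lemma dface_isN {W : C} {n : ℕ} {u : W ⟶ X.X (n + 2)} (hu : IsN u) {j : ℕ}
    (hj1 : 1 ≤ j) (hj2 : j ≤ n + 2) : IsN (u ≫ X.d (n + 1) j false) := by
  intro i hi1 hi2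
  rw [Category.assoc]
  rcases lt_or_ge i j with h | h
  · rw [X.dd n i j true false hi1 h hj2, ← Category.assoc, hu i hi1 (by omega), zero_comp]
  · have hh := X.dd n j (i + 1) false true hj1 (by omega) (by omega)
    simp only [Nat.add_sub_cancel] at hh
    rw [← hh, ← Category.assoc, hu (i + 1) (by omega) (by omega), zero_comp]

lemma conn_isN {W : C} {n : ℕ} {u : W ⟶ X.X (n + 1)} (hu : IsN u) {j : ℕ}
    (hj1 : 1 ≤ j) (hj2 : j ≤ n + 1) : IsN (u ≫ X.conn n j) := by
  intro i hi1 hi2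
  rw [Category.assoc]
  rcases lt_or_ge i j with h | h
  · obtain ⟨n', rfl⟩ : ∃ n', n = n' + 1 := ⟨n - 1, by omega⟩
    rw [X.dconn_lt n' i j true hi1 h (by omega), ← Category.assoc,
      hu i hi1 (by omega), zero_comp]
  · rcases lt_or_ge (j + 1) i with h2 | h2
    · obtain ⟨n', rfl⟩ : ∃ n', n = n' + 1 := ⟨n - 1, by omega⟩
      rw [X.dconn_gt n' i j true hj1 h2 (by omega), ← Category.assoc,
        hu (i - 1) (by omega) (by omega), zero_comp]
    · have : i = j ∨ i = j + 1 := by omega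
      rcases this with rfl | rfl
      · rw [(X.dconn_eq_one n i hj1 hj2).1, ← Category.assoc, hu i hj1 hj2, zero_comp]
      · rw [(X.dconn_eq_one n j hj1 hj2).2, ← Category.assoc, hu j hj1 hj2, zero_comp]

lemma D_isN {W : C} {n : ℕ} {u : W ⟶ X.X (n + 2)} (hu : IsN u) :
    IsN (u ≫ DD X (n + 1)) := by
  intro i hi1 hi2
  simp only [DD, Preadditive.comp_sum, Preadditive.sum_comp, Preadditive.comp_zsmul,
    Preadditive.zsmul_comp, Category.assoc]
  refine Finset.sum_eq_zero fun j hj => ?_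
  rw [Finset.mem_Icc] at hj
  have h := dface_isN hu hj.1 hj.2 i hi1 hi2
  rw [Category.assoc] at h
  rw [h, smul_zero]

lemma phi_isN {W : C} {n : ℕ} {u : W ⟶ X.X (n + 2)} (hu : IsN u) {q : ℕ}
    (hq : q ≤ n) : IsN (u ≫ phi X n q) := by
  intro i hi1 hi2
  have h1 := dface_isN hu (show 1 ≤ q + 1 by omega) (show q + 1 ≤ n + 2 by omega)
  have h2 := conn_isN h1 (show 1 ≤ q + 1 by omega) (show q + 1 ≤ n + 1 by omega) i hi1 hi2
  simp only [Category.assoc] at h2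
  simp only [phi, Preadditive.comp_sub, Preadditive.sub_comp, Category.comp_id,
    Category.assoc, hu i hi1 hi2, h2, sub_zero]

lemma phi_d_self (n q : ℕ) (hq : q ≤ n) :
    phi X n q ≫ X.d (n + 1) (q + 1) false = 0 := by
  simp only [phi, Preadditive.sub_comp, Category.id_comp, Category.assoc,
    (X.dconn_eq_zero n (q + 1) (by omega) (by omega)).1, Category.comp_id, sub_self]

lemma phi_d_lt (n' q i : ℕ) (hq : q ≤ n' + 1) (hi1 : 1 ≤ i) (hi2 : i ≤ q) :
    phi X (n' + 1) q ≫ X.d (n' + 2) i false =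
      X.d (n' + 2) i false ≫ (𝟙 _ - X.d (n' + 1) q false ≫ X.conn n' q) := by
  have e1 := X.dconn_lt n' i (q + 1) false hi1 (by omega) (by omega)
  simp only [Nat.add_sub_cancel] at e1
  have e2 := X.dd (n' + 1) i (q + 1) false false hi1 (by omega) (by omega)
  simp only [Nat.add_sub_cancel] at e2
  simp only [phi, Preadditive.sub_comp, Category.id_comp, Category.assoc, e1,
    Preadditive.comp_sub, Category.comp_id]
  rw [← Category.assoc, e2, Category.assoc]

lemma GG_props {n : ℕ} (k : ℕ) (hk : k ≤ n + 1) {W : C} {u : W ⟶ X.X (n + 2)}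
    (hu : IsN u) :
    IsN (u ≫ GG X (n + 2) k) ∧
      ∀ i, 1 ≤ i → i ≤ k → (u ≫ GG X (n + 2) k) ≫ X.d (n + 1) i false = 0 := by
  induction k with
  | zero =>
    rw [GG_zero, Category.comp_id]
    exact ⟨hu, fun i h1 h2 => by omega⟩
  | succ k ih =>
    obtain ⟨h1, h2⟩ := ih (by omega)
    have hGG : u ≫ GG X (n + 2) (k + 1) = (u ≫ GG X (n + 2) k) ≫ phi X n k := by
      rw [GG_succ, ← Category.assoc]
    constructor
    · rw [hGG]; exact phi_isN h1 (by omega)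
    · intro i hi1 hi2
      rcases Nat.lt_or_ge i (k + 1) with h | h
      · have hik : i ≤ k := by omega
        obtain ⟨n', rfl⟩ : ∃ n', n = n' + 1 := ⟨n - 1, by omega⟩
        rw [hGG, Category.assoc, phi_d_lt n' k i (by omega) hi1 hik, ← Category.assoc,
          h2 i hi1 hik, zero_comp]
      · have : i = k + 1 := by omega
        subst this
        rw [hGG, Category.assoc, phi_d_self n k (by omega), comp_zero]

lemma GG_fix {n : ℕ} (k : ℕ) (hk : k ≤ n + 1) {W : C} {u : W ⟶ X.X (n + 2)}
    (hu : ∀ i, 1 ≤ i → i ≤ n + 1 → u ≫ X.d (n + 1) i false = 0) :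
    u ≫ GG X (n + 2) k = u := by
  induction k with
  | zero => rw [GG_zero, Category.comp_id]
  | succ k ih =>
    rw [GG_succ, ← Category.assoc, ih (by omega)]
    simp only [phi, Preadditive.comp_sub, Category.comp_id, ← Category.assoc,
      hu (k + 1) (by omega) (by omega), zero_comp, sub_zero]

lemma GG_isN_all {n : ℕ} (k : ℕ) (hk : k ≤ n) {W : C} {u : W ⟶ X.X (n + 1)}
    (hu : IsN u) : IsN (u ≫ GG X (n + 1) k) := by
  cases n with
  | zero => rw [GG_one, Category.comp_id]; exact hu
  | succ n' => exact (GG_props k (by omega) hu).1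

lemma Hh_isN {n : ℕ} {W : C} {u : W ⟶ X.X (n + 1)} (hu : IsN u) :
    IsN (u ≫ Hh X (n + 1)) := by
  intro i hi1 hi2
  simp only [Hh, Preadditive.comp_sum, Preadditive.sum_comp, Preadditive.comp_zsmul,
    Preadditive.zsmul_comp, Category.assoc]
  refine Finset.sum_eq_zero fun k hk => ?_
  rw [Finset.mem_range] at hk
  have h1 : IsN (u ≫ GG X (n + 1) k) := GG_isN_all k (by omega) hu
  have h2 := conn_isN h1 (show 1 ≤ k + 1 by omega) (show k + 1 ≤ n + 1 by omega) i hi1 hi2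
  simp only [Category.assoc] at h2
  rw [h2, smul_zero]

lemma Hh_succ (n : ℕ) : Hh X (n + 1) = ∑ k ∈ Finset.range (n + 1),
    ((-1 : ℤ) ^ k) • (GG X (n + 1) k ≫ X.conn n (k + 1)) := rfl

lemma DD_DD (n : ℕ) : DD X (n + 1) ≫ DD X n = 0 := by
  rw [DD, DD, Preadditive.sum_comp]
  simp only [Preadditive.comp_sum, Preadditive.zsmul_comp, Preadditive.comp_zsmul, smul_smul]
  rw [← Finset.sum_product']
  refine Finset.sum_involution
    (fun p _ => if p.2 < p.1 then (p.2, p.1 - 1) else (p.2 + 1, p.1)) ?_ ?_ ?_ ?_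
  · rintro ⟨j, i⟩ hp
    simp only [Finset.mem_product, Finset.mem_Icc] at hp
    by_cases h : i < j
    · simp only [if_pos h]
      obtain ⟨j', rfl⟩ : ∃ j', j = j' + 1 := ⟨j - 1, by omega⟩
      have e := X.dd n i (j' + 1) false false (by omega) (by omega) (by omega)
      simp only [Nat.add_sub_cancel] at e ⊢
      rw [e, ← add_smul,
        show ((-1 : ℤ) ^ (i + 1) * (-1 : ℤ) ^ (j' + 1 + 1) +
          (-1 : ℤ) ^ (j' + 1) * (-1 : ℤ) ^ (i + 1) : ℤ) = 0 by ring, zero_smul]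
    · simp only [if_neg h]
      have e := X.dd n j (i + 1) false false (by omega) (by omega) (by omega)
      simp only [Nat.add_sub_cancel] at e
      rw [e, ← add_smul,
        show ((-1 : ℤ) ^ (i + 1) * (-1 : ℤ) ^ (j + 1) +
          (-1 : ℤ) ^ (j + 1) * (-1 : ℤ) ^ (i + 1 + 1) : ℤ) = 0 by ring, zero_smul]
  · rintro ⟨j, i⟩ hp _
    simp only [Finset.mem_product, Finset.mem_Icc] at hp
    dsimp only
    split_ifs with h <;> (intro hcontra; rw [Prod.mk.injEq] at hcontra; omega)
  · rintro ⟨j, i⟩ hp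
    simp only [Finset.mem_product, Finset.mem_Icc] at hp
    dsimp only
    split_ifs with h <;> (simp only [Finset.mem_product, Finset.mem_Icc]; omega)
  · rintro ⟨j, i⟩ hp
    simp only [Finset.mem_product, Finset.mem_Icc] at hp
    dsimp only
    by_cases h : i < j
    · rw [if_pos h]
      dsimp only
      rw [if_neg (show ¬ (j - 1 < i) by omega), Prod.mk.injEq]
      exact ⟨by omega, rfl⟩
    · rw [if_neg h]
      dsimp only
      rw [if_pos (show j < i + 1 by omega), Prod.mk.injEq]
      exact ⟨rfl, by omega⟩

lemma DD_DD_w (n : ℕ) {Z : C} (w : X.X n ⟶ Z) : DD X (n + 1) ≫ DD X n ≫ w = 0 := by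
  rw [← Category.assoc, DD_DD, zero_comp]

lemma hA (n q : ℕ) (hq : q ≤ n + 1) {W : C} (v : W ⟶ X.X (n + 2))
    (hv : ∀ i, 1 ≤ i → i ≤ q → v ≫ X.d (n + 1) i false = 0) :
    v ≫ X.conn (n + 1) (q + 1) ≫ DD X (n + 2) =
      ∑ l ∈ Finset.Ioc (q + 1) (n + 2),
        ((-1 : ℤ) ^ l) • (v ≫ X.d (n + 1) l false ≫ X.conn n (q + 1)) := by
  rw [DD]
  simp only [Preadditive.comp_sum, Preadditive.comp_zsmul]
  rw [show Finset.Icc 1 (n + 3) = Finset.Ioc 0 (n + 3) by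
    ext x; simp only [Finset.mem_Icc, Finset.mem_Ioc]; omega]
  rw [← Finset.sum_Ioc_consecutive _ (show 0 ≤ q + 2 by omega) (show q + 2 ≤ n + 3 by omega)]
  rw [← Finset.sum_Ioc_consecutive _ (show 0 ≤ q by omega) (show q ≤ q + 2 by omega)]
  have h1 : ∑ i ∈ Finset.Ioc 0 q,
      ((-1 : ℤ) ^ (i + 1)) • (v ≫ X.conn (n + 1) (q + 1) ≫ X.d (n + 2) i false) = 0 := by
    refine Finset.sum_eq_zero fun i hi => ?_
    rw [Finset.mem_Ioc] at hi
    have e := X.dconn_lt n i (q + 1) false (by omega) (by omega) (by omega)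
    simp only [Nat.add_sub_cancel] at e
    rw [e, ← Category.assoc, hv i (by omega) (by omega), zero_comp, smul_zero]
  have h2 : ∑ i ∈ Finset.Ioc q (q + 2),
      ((-1 : ℤ) ^ (i + 1)) • (v ≫ X.conn (n + 1) (q + 1) ≫ X.d (n + 2) i false) = 0 := by
    rw [show Finset.Ioc q (q + 2) = {q + 1, q + 2} by
      ext x; simp only [Finset.mem_Ioc, Finset.mem_insert, Finset.mem_singleton]; omega]
    rw [Finset.sum_insert (by simp), Finset.sum_singleton]
    rw [(X.dconn_eq_zero (n + 1) (q + 1) (by omega) (by omega)).1]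
    have e2 := (X.dconn_eq_zero (n + 1) (q + 1) (by omega) (by omega)).2
    rw [show q + 1 + 1 = q + 2 by omega] at e2
    rw [e2, Category.comp_id, ← add_smul,
      show ((-1 : ℤ) ^ (q + 1 + 1) + (-1 : ℤ) ^ (q + 2 + 1) : ℤ) = 0 by ring, zero_smul]
  rw [h1, h2, zero_add, zero_add]
  refine Finset.sum_nbij' (fun a => a - 1) (fun b => b + 1) ?_ ?_ ?_ ?_ ?_
  · intro a ha; simp only [Finset.mem_Ioc] at ha ⊢; omega
  · intro b hb; simp only [Finset.mem_Ioc] at hb ⊢; omega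
  · intro a ha; simp only [Finset.mem_Ioc] at ha; omega
  · intro b hb; omega
  · intro a ha
    rw [Finset.mem_Ioc] at ha
    obtain ⟨l, rfl⟩ : ∃ l, a = l + 1 := ⟨a - 1, by omega⟩
    simp only [Nat.add_sub_cancel]
    have e := X.dconn_gt n (l + 1) (q + 1) false (by omega) (by omega) (by omega)
    simp only [Nat.add_sub_cancel] at e
    rw [e, show ((-1 : ℤ) ^ (l + 1 + 1) : ℤ) = (-1 : ℤ) ^ l by ring]

lemma hB (n q : ℕ) (hq : q ≤ n) {W : C} (v : W ⟶ X.X (n + 2))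
    (hv : ∀ i, 1 ≤ i → i ≤ q → v ≫ X.d (n + 1) i false = 0) :
    v ≫ DD X (n + 1) ≫ X.conn n (q + 1) =
      ((-1 : ℤ) ^ q) • (v ≫ X.d (n + 1) (q + 1) false ≫ X.conn n (q + 1)) +
      ∑ l ∈ Finset.Ioc (q + 1) (n + 2),
        ((-1 : ℤ) ^ (l + 1)) • (v ≫ X.d (n + 1) l false ≫ X.conn n (q + 1)) := by
  rw [DD]
  simp only [Preadditive.sum_comp, Preadditive.comp_sum, Preadditive.zsmul_comp,
    Preadditive.comp_zsmul, Category.assoc]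
  rw [show Finset.Icc 1 (n + 2) = Finset.Ioc 0 (n + 2) by
    ext x; simp only [Finset.mem_Icc, Finset.mem_Ioc]; omega]
  rw [← Finset.sum_Ioc_consecutive _ (show 0 ≤ q + 1 by omega) (show q + 1 ≤ n + 2 by omega)]
  rw [← Finset.sum_Ioc_consecutive _ (show 0 ≤ q by omega) (show q ≤ q + 1 by omega)]
  have h1 : ∑ i ∈ Finset.Ioc 0 q,
      ((-1 : ℤ) ^ (i + 1)) • (v ≫ X.d (n + 1) i false ≫ X.conn n (q + 1)) = 0 := by
    refine Finset.sum_eq_zero fun i hi => ?_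
    rw [Finset.mem_Ioc] at hi
    rw [← Category.assoc, hv i (by omega) (by omega), zero_comp, smul_zero]
  rw [h1, zero_add, Nat.Ioc_succ_singleton, Finset.sum_singleton,
    show ((-1 : ℤ) ^ (q + 1 + 1) : ℤ) = (-1 : ℤ) ^ q by ring]

lemma step (n q : ℕ) (hq : q ≤ n) {W : C} (v : W ⟶ X.X (n + 2))
    (hv : ∀ i, 1 ≤ i → i ≤ q → v ≫ X.d (n + 1) i false = 0) :
    v ≫ phi X n q = v -
      (((-1 : ℤ) ^ q) • (v ≫ X.conn (n + 1) (q + 1) ≫ DD X (n + 2)) +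
       ((-1 : ℤ) ^ q) • (v ≫ DD X (n + 1) ≫ X.conn n (q + 1))) := by
  have key : ((-1 : ℤ) ^ q) • (v ≫ X.conn (n + 1) (q + 1) ≫ DD X (n + 2)) +
      ((-1 : ℤ) ^ q) • (v ≫ DD X (n + 1) ≫ X.conn n (q + 1)) =
      v ≫ X.d (n + 1) (q + 1) false ≫ X.conn n (q + 1) := by
    rw [hA n q (by omega) v hv, hB n q hq v hv, Finset.smul_sum, smul_add, Finset.smul_sum,
      smul_smul, show ((-1 : ℤ) ^ q * (-1 : ℤ) ^ q : ℤ) = 1 by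
        rw [← pow_add]; exact Even.neg_one_pow ⟨q, rfl⟩, one_smul]
    have hz : (∑ l ∈ Finset.Ioc (q + 1) (n + 2),
        ((-1 : ℤ) ^ q) • (((-1 : ℤ) ^ l) • (v ≫ X.d (n + 1) l false ≫ X.conn n (q + 1)))) +
        (∑ l ∈ Finset.Ioc (q + 1) (n + 2),
        ((-1 : ℤ) ^ q) • (((-1 : ℤ) ^ (l + 1)) • (v ≫ X.d (n + 1) l false ≫ X.conn n (q + 1)))) = 0 := by
      rw [← Finset.sum_add_distrib]
      refine Finset.sum_eq_zero fun l hl => ?_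
      rw [smul_smul, smul_smul, ← add_smul,
        show ((-1 : ℤ) ^ q * (-1 : ℤ) ^ l + (-1 : ℤ) ^ q * (-1 : ℤ) ^ (l + 1) : ℤ) = 0 by ring,
        zero_smul]
    rw [add_left_comm, hz, add_zero]
  rw [key]
  simp only [phi, Preadditive.comp_sub, Category.comp_id]

lemma conn_top (n : ℕ) {W : C} (w : W ⟶ X.X (n + 2))
    (hw : ∀ i, 1 ≤ i → i ≤ n + 1 → w ≫ X.d (n + 1) i false = 0) :
    w ≫ X.conn (n + 1) (n + 1 + 1) ≫ DD X (n + 2) = 0 := by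
  rw [hA n (n + 1) le_rfl w hw]
  refine Finset.sum_eq_zero fun l hl => absurd (Finset.mem_Ioc.mp hl) (by omega)

lemma Emain (K : ℕ) : ∀ (n : ℕ), K ≤ n + 1 → ∀ {W : C} (u : W ⟶ X.X (n + 2)), IsN u →
    u ≫ GG X (n + 2) K = u - ∑ k ∈ Finset.range K,
      (((-1 : ℤ) ^ k) • (u ≫ GG X (n + 2) k ≫ X.conn (n + 1) (k + 1) ≫ DD X (n + 2)) +
       ((-1 : ℤ) ^ k) • (u ≫ DD X (n + 1) ≫ GG X (n + 1) k ≫ X.conn n (k + 1))) := by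
  induction K with
  | zero =>
    intro n hK W u hu
    rw [GG_zero, Category.comp_id, Finset.range_zero, Finset.sum_empty, sub_zero]
  | succ K ih =>
    intro n hK W u hu
    have hKn : K ≤ n := by omega
    have hkills := (GG_props K (by omega) hu).2
    have hstep := step n K hKn (u ≫ GG X (n + 2) K) hkills
    simp only [Category.assoc] at hstep
    have hc : u ≫ GG X (n + 2) K ≫ DD X (n + 1) =
        u ≫ DD X (n + 1) ≫ GG X (n + 1) K := by
      cases n with
      | zero =>
        obtain rfl : K = 0 := by omega
        rw [GG_zero, GG_one, Category.id_comp, Category.comp_id]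
      | succ n' =>
        have h1 := ih (n' + 1) (by omega) u hu
        have h2 := ih n' (by omega) (u ≫ DD X (n' + 2)) (D_isN hu)
        simp only [Category.assoc] at h2
        rw [← Category.assoc u (GG X (n' + 3) K) (DD X (n' + 2)), h1, h2]
        simp only [Preadditive.sub_comp, Preadditive.sum_comp, Preadditive.add_comp,
          Preadditive.zsmul_comp, Category.assoc, DD_DD_w, DD_DD, zero_comp, comp_zero,
          smul_zero, add_zero, zero_add]
    have hcomm : ∀ {Z : C} (w : X.X (n + 1) ⟶ Z),
        u ≫ GG X (n + 2) K ≫ DD X (n + 1) ≫ w =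
        u ≫ DD X (n + 1) ≫ GG X (n + 1) K ≫ w := by
      intro Z w
      rw [← Category.assoc u, ← Category.assoc (u ≫ GG X (n + 2) K), ← Category.assoc u,
        ← Category.assoc (u ≫ DD X (n + 1))]
      rw [Category.assoc u (GG X (n + 2) K) (DD X (n + 1)),
        Category.assoc u (DD X (n + 1)) (GG X (n + 1) K), hc]
    rw [show u ≫ GG X (n + 2) (K + 1) = u ≫ GG X (n + 2) K ≫ phi X n K by
      rw [GG_succ], hstep, hcomm (X.conn n (K + 1)), Finset.sum_range_succ,
      ih n (by omega) u hu]
    abel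

lemma QX (n : ℕ) {W : C} (u : W ⟶ X.X (n + 1)) (hu : IsN u) :
    u ≫ GG X (n + 1) n =
      u - u ≫ Hh X (n + 1) ≫ DD X (n + 1) - u ≫ DD X n ≫ Hh X n := by
  cases n with
  | zero =>
    show u ≫ GG X 1 0 = u - u ≫ Hh X 1 ≫ DD X 1 - u ≫ DD X 0 ≫ Hh X 0
    have h2 : Hh X 0 = 0 := rfl
    have hh1 : Hh X 1 = GG X 1 0 ≫ X.conn 0 1 := by
      show Hh X (0 + 1) = _
      rw [Hh_succ, Finset.sum_range_one, pow_zero, one_smul]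
    have hconn : X.conn 0 1 ≫ DD X 1 = 0 := by
      rw [DD]
      rw [show Finset.Icc 1 (1 + 1) = {1, 2} by
        ext x; simp only [Finset.mem_Icc, Finset.mem_insert, Finset.mem_singleton]; omega]
      rw [Finset.sum_insert (by simp), Finset.sum_singleton]
      rw [Preadditive.comp_add, Preadditive.comp_zsmul, Preadditive.comp_zsmul]
      have e1 : X.conn 0 1 ≫ X.d 1 1 false = 𝟙 (X.X 1) :=
        (X.dconn_eq_zero 0 1 (by omega) (by omega)).1
      have e2 : X.conn 0 1 ≫ X.d 1 2 false = 𝟙 (X.X 1) :=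
        (X.dconn_eq_zero 0 1 (by omega) (by omega)).2
      rw [e1, e2, ← add_smul, show ((-1 : ℤ) ^ (1 + 1) + (-1 : ℤ) ^ (2 + 1) : ℤ) = 0 by ring,
        zero_smul]
    rw [GG_one, Category.comp_id, h2, comp_zero, comp_zero, sub_zero, hh1, GG_one,
      Category.id_comp, hconn, comp_zero, sub_zero]
  | succ m =>
    show u ≫ GG X (m + 2) (m + 1) =
      u - u ≫ Hh X (m + 2) ≫ DD X (m + 2) - u ≫ DD X (m + 1) ≫ Hh X (m + 1)
    have hE := Emain (m + 1) m (by omega) u hu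
    have hHhD : u ≫ Hh X (m + 2) ≫ DD X (m + 2) =
        ∑ k ∈ Finset.range (m + 1),
          ((-1 : ℤ) ^ k) • (u ≫ GG X (m + 2) k ≫ X.conn (m + 1) (k + 1) ≫ DD X (m + 2)) := by
      rw [show Hh X (m + 2) = Hh X (m + 1 + 1) by rfl, Hh_succ]
      simp only [Preadditive.sum_comp, Preadditive.comp_sum, Preadditive.zsmul_comp,
        Preadditive.comp_zsmul, Category.assoc]
      rw [Finset.sum_range_succ]
      have hw := (GG_props (n := m) (m + 1) le_rfl hu).2
      have htop := conn_top m (u ≫ GG X (m + 2) (m + 1)) hw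
      simp only [Category.assoc] at htop
      rw [htop, smul_zero, add_zero]
    have hDHh : u ≫ DD X (m + 1) ≫ Hh X (m + 1) =
        ∑ k ∈ Finset.range (m + 1),
          ((-1 : ℤ) ^ k) • (u ≫ DD X (m + 1) ≫ GG X (m + 1) k ≫ X.conn m (k + 1)) := by
      rw [Hh_succ]
      simp only [Preadditive.comp_sum, Preadditive.comp_zsmul, Category.assoc]
    rw [hE, hHhD, hDHh, Finset.sum_add_distrib]
    abel

end Stmt1Aux
open Stmt1Aux in
theorem stmt1 {C : Type u} [Category.{v} C] [Abelian C] (X : PseudocubConn C)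
    (MD : MooreData X.toPrecub) (ND : NormalizedData X.toPrecub)
    (ichain : MD.K ⟶ ND.K) (hincl : ∀ n, ichain.f n ≫ ND.ι n = MD.ι n) :
    (∃ r : ND.K ⟶ MD.K, ichain ≫ r = 𝟙 MD.K ∧
      Nonempty (Homotopy (r ≫ ichain) (𝟙 ND.K))) ∧
    ∀ n, IsIso (HomologicalComplex.homologyMap ichain n) := by
  classical
  have mN : ∀ n, Mono (ND.ι n) := ND.ι_mono
  have mM : ∀ n, Mono (MD.ι n) := MD.ι_mono
  have hiN : ∀ n, IsN (X := X) (ND.ι (n + 1)) := fun n i h1 h2 => ND.ι_ker n i h1 h2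
  have hNdiff : ∀ n, ND.K.d (n + 1) n ≫ ND.ι n = ND.ι (n + 1) ≫ DD X n := ND.diff
  -- components of the retraction r
  have rf_ex : ∀ n, ∃ l : ND.K.X (n + 1) ⟶ MD.K.X (n + 1),
      l ≫ MD.ι (n + 1) = ND.ι (n + 1) ≫ GG X (n + 1) n := by
    intro n
    cases n with
    | zero =>
      refine MD.ι_lift 0 (ND.ι 1 ≫ GG X 1 0) ?_ ?_
      · intro i h1 h2
        rw [GG_one, Category.comp_id]
        exact ND.ι_ker 0 i h1 h2
      · intro i h1 h2; omega
    | succ m =>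
      obtain ⟨hN, hkills⟩ := GG_props (n := m) (m + 1) le_rfl (hiN (m + 1))
      exact MD.ι_lift (m + 1) _ hN hkills
  choose rfs hrfs using rf_ex
  obtain ⟨rf0, hrf0⟩ := MD.ι_lift₀ (ND.ι 0)
  let rf : ∀ n, ND.K.X n ⟶ MD.K.X n := fun n =>
    match n with
    | 0 => rf0
    | n + 1 => rfs n
  have hrf : ∀ n, rf (n + 1) ≫ MD.ι (n + 1) = ND.ι (n + 1) ≫ GG X (n + 1) n := hrfs
  have hrf0' : rf 0 ≫ MD.ι 0 = ND.ι 0 := hrf0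
  -- components of the homotopy
  have Hf_ex : ∀ n, ∃ l : ND.K.X (n + 1) ⟶ ND.K.X (n + 2),
      l ≫ ND.ι (n + 2) = ND.ι (n + 1) ≫ Hh X (n + 1) :=
    fun n => ND.ι_lift (n + 1) _ (fun i h1 h2 => Hh_isN (hiN n) i h1 h2)
  choose Hfs hHfs using Hf_ex
  let Hf : ∀ n, ND.K.X n ⟶ ND.K.X (n + 1) := fun n =>
    match n with
    | 0 => 0
    | n + 1 => Hfs n
  -- the key identities at the level of the chain complexes
  have QK : ∀ n, rf (n + 1) ≫ ichain.f (n + 1) =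
      𝟙 (ND.K.X (n + 1)) - Hf (n + 1) ≫ ND.K.d (n + 2) (n + 1) -
        ND.K.d (n + 1) n ≫ Hf n := by
    intro n
    haveI := mN (n + 1)
    rw [← cancel_mono (ND.ι (n + 1)), Category.assoc, hincl (n + 1), hrf n,
      QX n (ND.ι (n + 1)) (hiN n)]
    have hterm1 : (Hf (n + 1) ≫ ND.K.d (n + 2) (n + 1)) ≫ ND.ι (n + 1) =
        ND.ι (n + 1) ≫ Hh X (n + 1) ≫ DD X (n + 1) := by
      rw [Category.assoc, hNdiff (n + 1), ← Category.assoc,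
        show Hf (n + 1) = Hfs n from rfl, hHfs n, Category.assoc]
    have hterm2 : (ND.K.d (n + 1) n ≫ Hf n) ≫ ND.ι (n + 1) =
        ND.ι (n + 1) ≫ DD X n ≫ Hh X n := by
      cases n with
      | zero =>
        rw [show Hf 0 = (0 : ND.K.X 0 ⟶ ND.K.X 1) from rfl,
          show Hh X 0 = (0 : X.X 0 ⟶ X.X 1) from rfl]
        simp
      | succ m =>
        rw [Category.assoc, show Hf (m + 1) = Hfs m from rfl, hHfs m, ← Category.assoc,
          hNdiff (m + 1), Category.assoc]
    simp only [Preadditive.sub_comp, Category.id_comp]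
    rw [hterm1, hterm2]
  have QK0 : rf 0 ≫ ichain.f 0 = 𝟙 (ND.K.X 0) - Hf 0 ≫ ND.K.d 1 0 := by
    haveI := mN 0
    rw [← cancel_mono (ND.ι 0), Category.assoc, hincl 0, hrf0',
      show Hf 0 = (0 : ND.K.X 0 ⟶ ND.K.X 1) from rfl]
    simp
  -- r as a chain map
  let r : ND.K ⟶ MD.K :=
    { f := rf
      comm' := by
        intro i j hij
        rw [ComplexShape.down_Rel] at hij
        subst hij
        haveI : Mono (ichain.f j ≫ ND.ι j) := by rw [hincl j]; exact mM j
        haveI : Mono (ichain.f j) := mono_of_mono (ichain.f j) (ND.ι j)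
        rw [← cancel_mono (ichain.f j), Category.assoc,
          ← HomologicalComplex.Hom.comm ichain (j + 1) j, ← Category.assoc, QK j,
          Category.assoc]
        cases j with
        | zero =>
          rw [QK0]
          simp only [Preadditive.sub_comp, Preadditive.comp_sub, Category.id_comp,
            Category.comp_id, Category.assoc, HomologicalComplex.d_comp_d, zero_comp,
            comp_zero, sub_zero]
          try abel
        | succ m =>
          rw [QK m]
          simp only [Preadditive.sub_comp, Preadditive.comp_sub, Category.id_comp,
            Category.comp_id, Category.assoc, HomologicalComplex.d_comp_d,
            HomologicalComplex.d_comp_d_assoc, zero_comp, comp_zero, sub_zero]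
          try abel }
  -- ichain ≫ r = 𝟙
  have hir : ichain ≫ r = 𝟙 MD.K := by
    apply HomologicalComplex.hom_ext
    intro n
    simp only [HomologicalComplex.comp_f, HomologicalComplex.id_f]
    haveI := mM n
    rw [← cancel_mono (MD.ι n)]
    cases n with
    | zero =>
      rw [Category.assoc, hrf0', hincl 0, Category.id_comp]
    | succ m =>
      rw [Category.assoc, hrf m, ← Category.assoc, hincl (m + 1), Category.id_comp]
      cases m with
      | zero => rw [GG_one, Category.comp_id]
      | succ p => exact GG_fix (p + 1) le_rfl (fun i h1 h2 => MD.ι_ker_zero (p + 1) i h1 h2)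
  -- the homotopy r ≫ ichain ≃ 𝟙
  let homf : ∀ i j, ND.K.X i ⟶ ND.K.X j := fun i j =>
    if h : j = i + 1 then (-(Hf i)) ≫ eqToHom (congrArg ND.K.X h.symm) else 0
  have homf_succ : ∀ i, homf i (i + 1) = -(Hf i) := by
    intro i
    show dite _ _ _ = _
    rw [dif_pos rfl, eqToHom_refl, Category.comp_id]
  have homot : Homotopy (r ≫ ichain) (𝟙 ND.K) :=
    { hom := homf
      zero := by
        intro i j hnr
        rw [ComplexShape.down_Rel] at hnr
        exact dif_neg (fun h => hnr h.symm)
      comm := by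
        intro n
        simp only [HomologicalComplex.comp_f, HomologicalComplex.id_f]
        cases n with
        | zero =>
          have hprev : prevD 0 homf = (-(Hf 0)) ≫ ND.K.d 1 0 := by
            rw [prevD_eq homf (show (ComplexShape.down ℕ).Rel (0 + 1) 0 by
              rw [ComplexShape.down_Rel]), homf_succ 0]
          have hnext : dNext 0 homf = 0 := by
            refine dNext_eq_zero homf 0 ?_
            rw [ComplexShape.down_Rel]
            omega
          rw [hnext, hprev, QK0]
          simp only [Preadditive.neg_comp]
          abel
        | succ m =>
          have hprev : prevD (m + 1) homf = (-(Hf (m + 1))) ≫ ND.K.d (m + 2) (m + 1) := by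
            rw [prevD_eq homf (show (ComplexShape.down ℕ).Rel (m + 1 + 1) (m + 1) by
              rw [ComplexShape.down_Rel]), homf_succ (m + 1)]
          have hnext : dNext (m + 1) homf = ND.K.d (m + 1) m ≫ (-(Hf m)) := by
            rw [dNext_eq homf (show (ComplexShape.down ℕ).Rel (m + 1) m by
              rw [ComplexShape.down_Rel]), homf_succ m]
          rw [hnext, hprev, QK m]
          simp only [Preadditive.neg_comp, Preadditive.comp_neg]
          abel }
  refine ⟨⟨r, hir, ⟨homot⟩⟩, ?_⟩
  intro n
  obtain ⟨e, he⟩ : ∃ e : HomotopyEquiv MD.K ND.K, e.hom = ichain :=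
    ⟨⟨ichain, r, Homotopy.ofEq hir, homot⟩, rfl⟩
  rw [← he, ← quasiIsoAt_iff_isIso_homologyMap]
  exact (inferInstance : QuasiIso e.hom).quasiIsoAt n
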